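/- The function D₀(x) = y − ln(1 + y), where y = 7/(324 x³(35x² + 33)), is strictly convex on the interval (1, ∞); equivalently, its second derivative with respect to x equals (343/54)(18191250x⁹ + 37110150x⁷ + 24992550x⁵ + 6125x⁴ + 5821794x³ + 6545x² + 2178) / (x⁵(35x² + 33)³(11340x⁵ + 10692x³ + 7)²), which is positive for x > 1. -/

import Mathlib

noncomputable def D₀ (x : ℝ) : ℝ :=
  7 / (324 * x ^ 3 * (35 * x ^ 2 + 33))
    - Real.log (1 + 7 / (324 * x ^ 3 * (35 * x ^ 2 + 33)))

noncomputable def g1 (x : ℝ) : ℝ :=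
  -49 * (56700*x^4 + 32076*x^2) /
    ((11340*x^5 + 10692*x^3)^2 * (11340*x^5 + 10692*x^3 + 7))

lemma hasDerivAt_u (x : ℝ) :
    HasDerivAt (fun x : ℝ => 11340*x^5 + 10692*x^3) (56700*x^4 + 32076*x^2) x := by
  have h1 := (hasDerivAt_pow 5 x).const_mul (11340:ℝ)
  have h2 := (hasDerivAt_pow 3 x).const_mul (10692:ℝ)
  refine (h1.add h2).congr_deriv ?_
  push_cast; ring

lemma u_pos {x : ℝ} (hx : 0 < x) : 0 < 11340*x^5 + 10692*x^3 := by
  have h5 := pow_pos hx 5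
  have h3 := pow_pos hx 3
  nlinarith

lemma hD : D₀ = fun x : ℝ =>
    7 / (11340*x^5 + 10692*x^3) - Real.log (1 + 7 / (11340*x^5 + 10692*x^3)) := by
  funext z
  have h : 324 * z ^ 3 * (35 * z ^ 2 + 33) = 11340*z^5 + 10692*z^3 := by ring
  rw [D₀, h]

lemma hd1 {x : ℝ} (hx : 0 < x) : HasDerivAt D₀ (g1 x) x := by
  have hu := u_pos hx
  set u : ℝ := 11340*x^5 + 10692*x^3 with hudef
  have hy : HasDerivAt (fun x : ℝ => 7 / (11340*x^5 + 10692*x^3))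
      ((0 * u - 7 * (56700*x^4 + 32076*x^2)) / u^2) x :=
    (hasDerivAt_const x 7).div (hasDerivAt_u x) hu.ne'
  have h1y : 0 < 1 + 7 / u := by positivity
  have hlog : HasDerivAt (fun x : ℝ => Real.log (1 + 7 / (11340*x^5 + 10692*x^3)))
      (((0 * u - 7 * (56700*x^4 + 32076*x^2)) / u^2) / (1 + 7 / u)) x := by
    have := ((hasDerivAt_const x (1:ℝ)).add hy).log h1y.ne'
    simpa using this
  rw [hD]
  refine (hy.sub hlog).congr_deriv ?_
  rw [g1]
  have hu7 : (0:ℝ) < u + 7 := by linarith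
  field_simp
  ring

lemma hd2 {x : ℝ} (hx : 0 < x) :
    HasDerivAt g1
      (((-49 * (226800*x^3 + 64152*x)) * ((11340*x^5 + 10692*x^3)^2 * (11340*x^5 + 10692*x^3 + 7))
        - (-49 * (56700*x^4 + 32076*x^2)) *
          ((2 * (11340*x^5 + 10692*x^3)^1 * (56700*x^4 + 32076*x^2)) * (11340*x^5 + 10692*x^3 + 7)
            + (11340*x^5 + 10692*x^3)^2 * (56700*x^4 + 32076*x^2)))
        / ((11340*x^5 + 10692*x^3)^2 * (11340*x^5 + 10692*x^3 + 7))^2) x := by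
  have hu := u_pos hx
  have hnum : HasDerivAt (fun x : ℝ => -49 * (56700*x^4 + 32076*x^2))
      (-49 * (226800*x^3 + 64152*x)) x := by
    have h1 := (hasDerivAt_pow 4 x).const_mul (56700:ℝ)
    have h2 := (hasDerivAt_pow 2 x).const_mul (32076:ℝ)
    have := (h1.add h2).const_mul (-49:ℝ)
    refine this.congr_deriv ?_
    push_cast; ring
  have hden : HasDerivAt
      (fun x : ℝ => (11340*x^5 + 10692*x^3)^2 * (11340*x^5 + 10692*x^3 + 7))
      ((2 * (11340*x^5 + 10692*x^3)^1 * (56700*x^4 + 32076*x^2)) * (11340*x^5 + 10692*x^3 + 7)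
        + (11340*x^5 + 10692*x^3)^2 * (56700*x^4 + 32076*x^2)) x :=
    ((hasDerivAt_u x).pow 2).mul ((hasDerivAt_u x).add_const 7)
  have hden0 : ((11340*x^5 + 10692*x^3)^2 * (11340*x^5 + 10692*x^3 + 7)) ≠ 0 := by
    have : (0:ℝ) < 11340*x^5 + 10692*x^3 + 7 := by linarith
    positivity
  exact hnum.div hden hden0

theorem D₀_strictly_convex :
    StrictConvexOn ℝ (Set.Ioi (1 : ℝ)) D₀ ∧
    ∀ x : ℝ, 1 < x →
      deriv (deriv D₀) x = 343 / 54 *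
        ((18191250 * x ^ 9 + 37110150 * x ^ 7 + 24992550 * x ^ 5 + 6125 * x ^ 4
          + 5821794 * x ^ 3 + 6545 * x ^ 2 + 2178) /
         (x ^ 5 * (35 * x ^ 2 + 33) ^ 3 * (11340 * x ^ 5 + 10692 * x ^ 3 + 7) ^ 2)) ∧
      0 < deriv (deriv D₀) x := by
  have key : ∀ x : ℝ, 1 < x →
      deriv (deriv D₀) x = 343 / 54 *
        ((18191250 * x ^ 9 + 37110150 * x ^ 7 + 24992550 * x ^ 5 + 6125 * x ^ 4
          + 5821794 * x ^ 3 + 6545 * x ^ 2 + 2178) /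
         (x ^ 5 * (35 * x ^ 2 + 33) ^ 3 * (11340 * x ^ 5 + 10692 * x ^ 3 + 7) ^ 2)) := by
    intro x hx
    have hx0 : (0:ℝ) < x := lt_trans one_pos hx
    have hev : deriv D₀ =ᶠ[nhds x] g1 := by
      filter_upwards [Ioi_mem_nhds hx0] with z hz
      exact (hd1 hz).deriv
    rw [hev.deriv_eq, (hd2 hx0).deriv]
    have hu := u_pos hx0
    have hu7 : (0:ℝ) < 11340*x^5 + 10692*x^3 + 7 := by linarith
    have h35 : (0:ℝ) < 35*x^2 + 33 := by positivity
    have hxne := hx0.ne'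
    field_simp
    ring
  have pos : ∀ x : ℝ, 1 < x → 0 < deriv (deriv D₀) x := by
    intro x hx
    rw [key x hx]
    have hx0 : (0:ℝ) < x := lt_trans one_pos hx
    have h1 : (0:ℝ) < 18191250 * x ^ 9 + 37110150 * x ^ 7 + 24992550 * x ^ 5 + 6125 * x ^ 4
          + 5821794 * x ^ 3 + 6545 * x ^ 2 + 2178 := by positivity
    have h2 : (0:ℝ) < x ^ 5 * (35 * x ^ 2 + 33) ^ 3 * (11340 * x ^ 5 + 10692 * x ^ 3 + 7) ^ 2 := by
      positivity
    positivity
  refine ⟨?_, fun x hx => ⟨key x hx, pos x hx⟩⟩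
  apply strictConvexOn_of_deriv2_pos (convex_Ioi 1)
  · intro x hx
    exact ((hd1 (lt_trans one_pos hx)).differentiableAt.continuousAt).continuousWithinAt
  · intro x hx
    rw [interior_Ioi] at hx
    have : deriv^[2] D₀ x = deriv (deriv D₀) x := by
      simp [Function.iterate_succ, Function.iterate_zero]
    rw [this]
    exact pos x hx
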